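/- Let P_m be the matrix with (P_m)_{ij} = C(m-i, j-i), and L_m the matrix with (L_m)_{ij} = C(i, i-j) p^{i-j} q^{j+1}. Then P_m^{-1} L_m P_m = T_m where (T_m)_{ij} = C(i, j) p^{i-j} q^{m+1-i}; equivalently, L_m P_m = P_m T_m. -/

import Mathlib

open Matrix

lemma vand (t i j : ℕ) :
    (i + t).choose j = ∑ s ∈ Finset.range (j+1), t.choose s * i.choose (j - s) := by
  rw [add_comm, Nat.add_choose_eq, Finset.Nat.sum_antidiagonal_eq_sum_range_succ_mk]

lemma key (p q : ℝ) (hpq : p + q = 1) (n r : ℕ) :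
    ∑ l ∈ Finset.range (n+1),
      (n.choose l : ℝ) * (l.choose r : ℝ) * p ^ (l - r) * q ^ (n - l)
      = (n.choose r : ℝ) := by
  rcases le_or_gt r n with hr | hr
  · rw [Finset.range_eq_Ico, ← Finset.sum_Ico_consecutive _ (Nat.zero_le r)
      (by omega : r ≤ n + 1)]
    have h0 : ∑ l ∈ Finset.Ico 0 r,
        (n.choose l : ℝ) * (l.choose r : ℝ) * p ^ (l - r) * q ^ (n - l) = 0 := by
      apply Finset.sum_eq_zero
      intro l hl
      simp only [Finset.mem_Ico] at hl
      rw [Nat.choose_eq_zero_of_lt hl.2]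
      simp
    rw [h0, zero_add, Finset.sum_Ico_eq_sum_range]
    have hrange : n + 1 - r = (n - r) + 1 := by omega
    rw [hrange]
    have hstep : ∀ t ∈ Finset.range ((n - r) + 1),
        (n.choose (r + t) : ℝ) * ((r + t).choose r : ℝ) * p ^ (r + t - r) * q ^ (n - (r + t))
        = (n.choose r : ℝ) * (((n - r).choose t : ℝ) * p ^ t * q ^ ((n - r) - t)) := by
      intro t ht
      simp only [Finset.mem_range] at ht
      have hc : n.choose (r + t) * (r + t).choose r = n.choose r * (n - r).choose t := by
        have := Nat.choose_mul (n := n) (k := r + t) (s := r) (by omega)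
        simpa using this
      have h1 : r + t - r = t := by omega
      have h2 : n - (r + t) = (n - r) - t := by omega
      have hc' : (n.choose (r+t) : ℝ) * ((r + t).choose r : ℝ)
          = (n.choose r : ℝ) * ((n - r).choose t : ℝ) := by exact_mod_cast hc
      rw [h1, h2]
      linear_combination (p ^ t * q ^ ((n - r) - t)) * hc'
    rw [Finset.sum_congr rfl hstep, ← Finset.mul_sum]
    have : ∑ t ∈ Finset.range ((n-r)+1), ((n - r).choose t : ℝ) * p ^ t * q ^ ((n - r) - t)
        = (p + q) ^ (n - r) := by
      rw [add_pow]
      apply Finset.sum_congr rfl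
      intro t ht
      ring
    rw [this, hpq, one_pow, mul_one]
  · rw [Nat.choose_eq_zero_of_lt hr]
    push_cast
    apply Finset.sum_eq_zero
    intro l hl
    simp only [Finset.mem_range] at hl
    rw [Nat.choose_eq_zero_of_lt (by omega : l < r)]
    simp

lemma inner (p q : ℝ) (hpq : p + q = 1) (n i j s : ℕ) (hsj : s ≤ j) :
    ∑ t ∈ Finset.range (n+1),
      (n.choose t : ℝ) * (t.choose s : ℝ) * (i.choose (j - s) : ℝ)
        * p ^ ((i + t) - j) * q ^ ((n - t) + 1)
    = q * ((n.choose s : ℝ) * (i.choose (j - s) : ℝ) * p ^ ((i + s) - j)) := by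
  rcases le_or_gt j (i + s) with h | h
  · have hstep : ∀ t ∈ Finset.range (n+1),
        (n.choose t : ℝ) * (t.choose s : ℝ) * (i.choose (j - s) : ℝ)
          * p ^ ((i + t) - j) * q ^ ((n - t) + 1)
        = (q * p ^ ((i + s) - j) * (i.choose (j - s) : ℝ))
            * ((n.choose t : ℝ) * (t.choose s : ℝ) * p ^ (t - s) * q ^ (n - t)) := by
      intro t _
      rcases le_or_gt s t with hst | hst
      · have he : (i + t) - j = (t - s) + ((i + s) - j) := by omega
        rw [he, pow_add, pow_succ]
        ring
      · rw [Nat.choose_eq_zero_of_lt hst]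
        push_cast
        ring
    rw [Finset.sum_congr rfl hstep, ← Finset.mul_sum, key p q hpq n s]
    ring
  · have h0 : (i.choose (j - s) : ℝ) = 0 := by
      rw [Nat.choose_eq_zero_of_lt (by omega : i < j - s)]
      simp
    rw [h0]
    simp

lemma inner2 (p q : ℝ) (hpq : p + q = 1) (i j s : ℕ) (hsj : s ≤ j) :
    ∑ l ∈ Finset.range (i+1),
      (if i + s ≤ j + l then
        (i.choose l : ℝ) * (l.choose ((j + l) - (i + s)) : ℝ) * p ^ l * q ^ ((i - l) + 1)
      else 0)
    = q * ((i.choose (j - s) : ℝ) * p ^ ((i + s) - j)) := by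
  rcases le_or_gt j (i + s) with h | h
  · have hstep : ∀ l ∈ Finset.range (i+1),
        (if i + s ≤ j + l then
          (i.choose l : ℝ) * (l.choose ((j + l) - (i + s)) : ℝ) * p ^ l * q ^ ((i - l) + 1)
        else 0)
        = (q * p ^ ((i + s) - j))
            * ((i.choose l : ℝ) * (l.choose ((i + s) - j) : ℝ) * p ^ (l - ((i+s)-j)) * q ^ (i - l)) := by
      intro l hl
      simp only [Finset.mem_range] at hl
      set r := (i + s) - j with hr
      rcases le_or_gt r l with hrl | hrl
      · rw [if_pos (by omega)]
        have h1 : (j + l) - (i + s) = l - r := by omega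
        have h2 : l.choose (l - r) = l.choose r := Nat.choose_symm hrl
        have h3 : p ^ l = p ^ (l - r) * p ^ r := by rw [← pow_add]; congr 1; omega
        rw [h1, h2, h3, pow_succ]
        ring
      · rw [if_neg (by omega), Nat.choose_eq_zero_of_lt hrl]
        push_cast
        ring
    rw [Finset.sum_congr rfl hstep, ← Finset.mul_sum, key p q hpq i ((i+s)-j)]
    have : i.choose ((i + s) - j) = i.choose (j - s) := by
      rw [← Nat.choose_symm (by omega : (i+s)-j ≤ i)]
      congr 1
      omega
    rw [this]
    ring
  · have h0 : (i.choose (j - s) : ℝ) = 0 := by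
      rw [Nat.choose_eq_zero_of_lt (by omega : i < j - s)]
      simp
    rw [h0]
    rw [Finset.sum_eq_zero]
    · ring
    intro l hl
    rcases le_or_gt (i + s) (j + l) with hc | hc
    · rw [if_pos hc, Nat.choose_eq_zero_of_lt (by omega : l < (j + l) - (i + s))]
      push_cast
      ring
    · rw [if_neg (by omega)]

lemma rhs_eq (p q : ℝ) (hpq : p + q = 1) (m i j : ℕ) (hi : i ≤ m) (hj : j ≤ m) :
    ∑ k ∈ Finset.range (m+1),
      (if i ≤ k then ((m - i).choose (k - i) : ℝ) else 0) *
        ((k.choose j : ℝ) * p ^ (k - j) * q ^ (m + 1 - k))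
    = q * ∑ s ∈ Finset.range (j+1),
        ((m - i).choose s : ℝ) * (i.choose (j - s) : ℝ) * p ^ ((i + s) - j) := by
  have hsplit : ∑ k ∈ Finset.range (m+1),
      (if i ≤ k then ((m - i).choose (k - i) : ℝ) else 0) *
        ((k.choose j : ℝ) * p ^ (k - j) * q ^ (m + 1 - k))
      = ∑ k ∈ Finset.Ico i (m+1),
      (if i ≤ k then ((m - i).choose (k - i) : ℝ) else 0) *
        ((k.choose j : ℝ) * p ^ (k - j) * q ^ (m + 1 - k)) := by
    rw [Finset.range_eq_Ico, ← Finset.sum_Ico_consecutive _ (Nat.zero_le i)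
      (by omega : i ≤ m + 1), Finset.sum_eq_zero, zero_add]
    intro k hk
    simp only [Finset.mem_Ico] at hk
    rw [if_neg (by omega)]
    ring
  rw [hsplit, Finset.sum_Ico_eq_sum_range]
  have hrange : m + 1 - i = (m - i) + 1 := by omega
  rw [hrange]
  have hstep : ∀ t ∈ Finset.range ((m - i) + 1),
      (if i ≤ i + t then ((m - i).choose ((i + t) - i) : ℝ) else 0) *
        (((i + t).choose j : ℝ) * p ^ ((i + t) - j) * q ^ (m + 1 - (i + t)))
      = ∑ s ∈ Finset.range (j+1),
          ((m - i).choose t : ℝ) * (t.choose s : ℝ) * (i.choose (j - s) : ℝ)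
            * p ^ ((i + t) - j) * q ^ (((m - i) - t) + 1) := by
    intro t ht
    simp only [Finset.mem_range] at ht
    rw [if_pos (by omega)]
    have h1 : (i + t) - i = t := by omega
    have h2 : m + 1 - (i + t) = ((m - i) - t) + 1 := by omega
    have h3 : ((i + t).choose j : ℝ) = ∑ s ∈ Finset.range (j+1),
        (t.choose s : ℝ) * (i.choose (j - s) : ℝ) := by
      exact_mod_cast congrArg (Nat.cast : ℕ → ℝ) (vand t i j)
    rw [h1, h2, h3, Finset.sum_mul, Finset.sum_mul, Finset.mul_sum]
    apply Finset.sum_congr rfl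
    intro s _
    ring
  rw [Finset.sum_congr rfl hstep, Finset.sum_comm, Finset.mul_sum]
  apply Finset.sum_congr rfl
  intro s hs
  simp only [Finset.mem_range] at hs
  rw [inner p q hpq (m - i) i j s (by omega)]

lemma lhs_eq (p q : ℝ) (hpq : p + q = 1) (m i j : ℕ) (hi : i ≤ m) (hj : j ≤ m) :
    ∑ k ∈ Finset.range (m+1),
      (if k ≤ i then (i.choose (i - k) : ℝ) * p ^ (i - k) * q ^ (k + 1) else 0) *
        (if k ≤ j then ((m - k).choose (j - k) : ℝ) else 0)
    = q * ∑ s ∈ Finset.range (j+1),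
        ((m - i).choose s : ℝ) * (i.choose (j - s) : ℝ) * p ^ ((i + s) - j) := by
  rw [← Finset.sum_subset (Finset.range_subset_range.2 (by omega : i + 1 ≤ m + 1))
    (by
      intro k _ hk
      simp only [Finset.mem_range] at hk
      rw [if_neg (by omega)]
      ring)]
  rw [← Finset.sum_range_reflect]
  have hstep : ∀ l ∈ Finset.range (i+1),
      (if i + 1 - 1 - l ≤ i then (i.choose (i - (i + 1 - 1 - l)) : ℝ) * p ^ (i - (i + 1 - 1 - l))
          * q ^ ((i + 1 - 1 - l) + 1) else 0) *
        (if i + 1 - 1 - l ≤ j then ((m - (i + 1 - 1 - l)).choose (j - (i + 1 - 1 - l)) : ℝ) else 0)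
      = ∑ s ∈ Finset.range (j+1),
          ((m - i).choose s : ℝ) *
            (if i + s ≤ j + l then
              (i.choose l : ℝ) * (l.choose ((j + l) - (i + s)) : ℝ) * p ^ l * q ^ ((i - l) + 1)
            else 0) := by
    intro l hl
    simp only [Finset.mem_range] at hl
    have e0 : i + 1 - 1 - l = i - l := by omega
    rw [e0, if_pos (by omega : i - l ≤ i)]
    have e1 : i - (i - l) = l := by omega
    rw [e1]
    rcases le_or_gt (i - l) j with hc | hc
    · rw [if_pos hc]
      have e2 : m - (i - l) = (m - i) + l := by omega
      have e3 : j - (i - l) = (j + l) - i := by omega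
      rw [e2, e3]
      have hij : i ≤ j + l := by omega
      have hv : (((m - i) + l).choose ((j + l) - i) : ℝ) = ∑ s ∈ Finset.range (((j+l)-i)+1),
          ((m - i).choose s : ℝ) * (l.choose (((j + l) - i) - s) : ℝ) := by
        have := vand (m - i) l ((j + l) - i)
        rw [add_comm l (m - i)] at this
        exact_mod_cast congrArg (Nat.cast : ℕ → ℝ) this
      rw [← Finset.sum_subset (Finset.range_subset_range.2 (by omega : ((j+l)-i) + 1 ≤ j + 1))
        (by
          intro s hs hns
          simp only [Finset.mem_range] at hs hns
          rw [if_neg (by omega), mul_zero])]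
      rw [hv, Finset.mul_sum]
      apply Finset.sum_congr rfl
      intro s hs
      simp only [Finset.mem_range] at hs
      rw [if_pos (by omega : i + s ≤ j + l)]
      have e5 : ((j + l) - i) - s = (j + l) - (i + s) := by omega
      rw [e5]
      ring
    · rw [if_neg (by omega : ¬ (i - l ≤ j))]
      rw [Finset.sum_eq_zero]
      · ring
      intro s hs
      rw [if_neg (by omega), mul_zero]
  rw [Finset.sum_congr rfl hstep, Finset.sum_comm, Finset.mul_sum]
  apply Finset.sum_congr rfl
  intro s hs
  simp only [Finset.mem_range] at hs
  rw [← Finset.mul_sum, inner2 p q hpq i j s (by omega)]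
  ring

/-- Conjugating `L_m` by the modal matrix `P_m` gives `T_m`:  `L_m P_m = P_m T_m`
(equivalently `P_m⁻¹ L_m P_m = T_m`). -/
theorem Lm_conjugate (p : ℝ) (hp : p ∈ Set.Ioo (0:ℝ) 1) (q : ℝ) (hq : q = 1 - p)
    (m : ℕ) (hm : 1 ≤ m)
    (L P T : Matrix (Fin (m + 1)) (Fin (m + 1)) ℝ)
    (hL : ∀ i j : Fin (m + 1),
      L i j = if (j : ℕ) ≤ (i : ℕ) then ((i : ℕ).choose ((i : ℕ) - (j : ℕ)) : ℝ)
        * p ^ ((i : ℕ) - (j : ℕ)) * q ^ ((j : ℕ) + 1) else 0)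
    (hP : ∀ i j : Fin (m + 1),
      P i j = if (i : ℕ) ≤ (j : ℕ) then ((m - (i : ℕ)).choose ((j : ℕ) - (i : ℕ)) : ℝ) else 0)
    (hT : ∀ i j : Fin (m + 1),
      T i j = ((i : ℕ).choose (j : ℕ) : ℝ) * p ^ ((i : ℕ) - (j : ℕ)) * q ^ (m + 1 - (i : ℕ))) :
    L * P = P * T := by
  have hpq : p + q = 1 := by rw [hq]; ring
  ext i j
  rw [Matrix.mul_apply, Matrix.mul_apply]
  have h1 : ∑ k : Fin (m + 1), L i k * P k j
      = ∑ k ∈ Finset.range (m+1),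
        (if k ≤ (i : ℕ) then ((i : ℕ).choose ((i : ℕ) - k) : ℝ)
            * p ^ ((i : ℕ) - k) * q ^ (k + 1) else 0) *
          (if k ≤ (j : ℕ) then ((m - k).choose ((j : ℕ) - k) : ℝ) else 0) := by
    rw [← Fin.sum_univ_eq_sum_range (fun k =>
      (if k ≤ (i : ℕ) then ((i : ℕ).choose ((i : ℕ) - k) : ℝ)
          * p ^ ((i : ℕ) - k) * q ^ (k + 1) else 0) *
        (if k ≤ (j : ℕ) then ((m - k).choose ((j : ℕ) - k) : ℝ) else 0)) (m+1)]
    exact Finset.sum_congr rfl fun k _ => by rw [hL, hP]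
  have h2 : ∑ k : Fin (m + 1), P i k * T k j
      = ∑ k ∈ Finset.range (m+1),
        (if (i : ℕ) ≤ k then ((m - (i : ℕ)).choose (k - (i : ℕ)) : ℝ) else 0) *
          ((k.choose (j : ℕ) : ℝ) * p ^ (k - (j : ℕ)) * q ^ (m + 1 - k)) := by
    rw [← Fin.sum_univ_eq_sum_range (fun k =>
      (if (i : ℕ) ≤ k then ((m - (i : ℕ)).choose (k - (i : ℕ)) : ℝ) else 0) *
        ((k.choose (j : ℕ) : ℝ) * p ^ (k - (j : ℕ)) * q ^ (m + 1 - k))) (m+1)]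
    exact Finset.sum_congr rfl fun k _ => by rw [hP, hT]
  rw [h1, h2, lhs_eq p q hpq m i j (by omega) (by omega),
    rhs_eq p q hpq m i j (by omega) (by omega)]
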